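/- Let F be a linearly ordered field, n ≥ 3, and let L_1, …, L_n be a line arrangement in F², where L_i is the zero set of an affine function f_i. With indices modulo n, let V_i = L_i ∩ L_{i+1}. Suppose that for each i there is a sign ε_i ∈ {−1, +1} such that ε_i · f_i(V_k) > 0 for every k ∉ {i−1, i}. Then the set R = {x ∈ F² : ε_i · f_i(x) ≥ 0 for all i} equals the convex hull of {V_1, …, V_n}, R contains no ray {v + t·w : t ≥ 0} with w ≠ 0 (i.e., R is bounded), and for each i the intersection R ∩ L_i is exactly the closed segment joining V_{i−1} and V_i. (Existence of global cyclicity: the n lines form an n-gonality.) -/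

import Mathlib

/-- The affine functional `p ↦ a i * p.1 + b i * p.2 - c i` cutting out the `i`-th line. -/
def arrLine {F : Type*} [Field F] [LinearOrder F] [IsStrictOrderedRing F] {n : ℕ} (a b c : Fin n → F)
    (i : Fin n) (p : F × F) : F :=
  a i * p.1 + b i * p.2 - c i

open Fin.NatCast Fin.CommRing

section helpers

variable {F : Type*} [Field F] [LinearOrder F] [IsStrictOrderedRing F]

lemma fin_cyc_ind {n : ℕ} [NeZero n] (g : Fin n → Prop) (h0 : g 0)
    (hs : ∀ i, g i → g (i + 1)) : ∀ i, g i := by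
  have key : ∀ k : ℕ, g (k : Fin n) := by
    intro k
    induction k with
    | zero => simpa using h0
    | succ k ih =>
      have := hs _ ih
      rwa [← Nat.cast_add_one] at this
  intro i
  simpa [Fin.cast_val_eq_self] using key i.val

lemma orth_collinear (p q x y : F) (h0 : ¬(p = 0 ∧ q = 0)) (h : p * x + q * y = 0) :
    ∃ μ : F, x = μ * (-q) ∧ y = μ * p := by
  by_cases hp : p = 0
  · have hq : q ≠ 0 := fun hq => h0 ⟨hp, hq⟩
    have hy : y = 0 := by
      rw [hp] at h
      simpa [hq] using h
    exact ⟨-x / q, by field_simp, by rw [hy, hp]; ring⟩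
  · refine ⟨y / p, ?_, by field_simp⟩
    field_simp
    linear_combination h

lemma no_cyclic_increase {n : ℕ} [NeZero n] (s t : Fin n → F)
    (hs : ∀ i, 0 ≤ s i) (h : ∀ i, 0 < s i * t (i + 1) - t i * s (i + 1)) : False := by
  by_cases hz : ∃ i, s i = 0
  · obtain ⟨i, hi⟩ := hz
    have h1 := h (i - 1)
    rw [sub_add_cancel, hi] at h1
    have h2 := h i
    rw [hi] at h2
    have hti : 0 < t i := by nlinarith [hs (i - 1)]
    nlinarith [hs (i + 1)]
  · push_neg at hz
    have hsp : ∀ i, 0 < s i := fun i => lt_of_le_of_ne (hs i) (Ne.symm (hz i))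
    have hstep : ∀ j : Fin n, t j / s j < t (j + 1) / s (j + 1) := by
      intro j
      rw [div_lt_div_iff₀ (hsp _) (hsp _)]
      nlinarith [h j]
    have hchain : ∀ k : ℕ, t 0 / s 0 < t ((k + 1 : ℕ) : Fin n) / s ((k + 1 : ℕ) : Fin n) := by
      intro k
      induction k with
      | zero => simpa using hstep 0
      | succ k ih =>
        refine ih.trans ?_
        have hc : ((k + 1 + 1 : ℕ) : Fin n) = ((k + 1 : ℕ) : Fin n) + 1 := by push_cast; ring
        rw [hc]
        exact hstep _
    have hn := hchain (n - 1)
    have he : ((n - 1 + 1 : ℕ) : Fin n) = 0 := by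
      have h' : n - 1 + 1 = n := Nat.succ_pred_eq_of_pos (Nat.pos_of_ne_zero (NeZero.ne n))
      rw [h']
      exact Fin.natCast_self n
    rw [he] at hn
    exact lt_irrefl _ hn

lemma arrLine_add_smul {n : ℕ} (a b c : Fin n → F) (i : Fin n) (p w : F × F) (t : F) :
    arrLine a b c i (p + t • w) = arrLine a b c i p + t * (a i * w.1 + b i * w.2) := by
  have e1 : (p + t • w).1 = p.1 + t * w.1 := rfl
  have e2 : (p + t • w).2 = p.2 + t * w.2 := rfl
  simp only [arrLine, e1, e2]
  ring

lemma arrLine_smul_dir {n : ℕ} (a b c : Fin n → F) (j : Fin n) (p q : F × F) (t : F) :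
    arrLine a b c j (p + t • (q - p)) =
      arrLine a b c j p + t * (arrLine a b c j q - arrLine a b c j p) := by
  have e1 : (p + t • (q - p)).1 = p.1 + t * (q.1 - p.1) := rfl
  have e2 : (p + t • (q - p)).2 = p.2 + t * (q.2 - p.2) := rfl
  simp only [arrLine, e1, e2]
  ring

lemma arrLine_sub_eq {n : ℕ} (a b c : Fin n → F) (j : Fin n) (p q : F × F) :
    arrLine a b c j p - arrLine a b c j q = a j * (p - q).1 + b j * (p - q).2 := by
  have e1 : (p - q).1 = p.1 - q.1 := rfl
  have e2 : (p - q).2 = p.2 - q.2 := rfl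
  simp only [arrLine, e1, e2]
  ring

lemma div_neg_mul (X m : F) (hm : m < 0) : X / (-m) * m = -X := by
  have h : -m ≠ 0 := neg_ne_zero.mpr (ne_of_lt hm)
  rw [div_mul_eq_mul_div, div_eq_iff h]
  ring

end helpers

set_option maxHeartbeats 1600000 in
theorem existence_of_global_cyclicity
    {F : Type*} [Field F] [LinearOrder F] [IsStrictOrderedRing F] (n : ℕ) [NeZero n] (hn : 3 ≤ n)
    (a b c : Fin n → F)
    (hnd : ∀ i : Fin n, (a i, b i) ≠ (0, 0))
    (hpar : ∀ i j : Fin n, i ≠ j → a i * b j ≠ a j * b i)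
    (hconc : ∀ i j k : Fin n, i ≠ j → j ≠ k → i ≠ k →
      ¬ ∃ p : F × F, arrLine a b c i p = 0 ∧ arrLine a b c j p = 0 ∧ arrLine a b c k p = 0)
    (V : Fin n → F × F)
    (hV : ∀ i : Fin n, arrLine a b c i (V i) = 0 ∧ arrLine a b c (i + 1) (V i) = 0)
    (ε : Fin n → F) (hε : ∀ i : Fin n, ε i = 1 ∨ ε i = -1)
    (hside : ∀ i k : Fin n, k ≠ i - 1 → k ≠ i → 0 < ε i * arrLine a b c i (V k)) :
    {x : F × F | ∀ i : Fin n, 0 ≤ ε i * arrLine a b c i x} = convexHull F (Set.range V) ∧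
    (¬ ∃ v w : F × F, w ≠ 0 ∧ ∀ t : F, 0 ≤ t →
      v + t • w ∈ {x : F × F | ∀ i : Fin n, 0 ≤ ε i * arrLine a b c i x}) ∧
    (∀ i : Fin n,
      {x : F × F | ∀ j : Fin n, 0 ≤ ε j * arrLine a b c j x} ∩ {x : F × F | arrLine a b c i x = 0}
        = segment F (V (i - 1)) (V i)) := by
  classical
  -- basic index facts
  have h1ne : (1 : Fin n) ≠ 0 := by
    intro h
    have h2 : ((1 : ℕ) : Fin n) = 0 := by push_cast; exact h
    rw [Fin.natCast_eq_zero] at h2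
    have := Nat.le_of_dvd (by norm_num) h2
    omega
  have h2ne : (2 : Fin n) ≠ 0 := by
    intro h
    have h2 : ((2 : ℕ) : Fin n) = 0 := by push_cast; exact h
    rw [Fin.natCast_eq_zero] at h2
    have := Nat.le_of_dvd (by norm_num) h2
    omega
  have hεne : ∀ i : Fin n, ε i ≠ 0 := by
    intro i; rcases hε i with h | h <;> rw [h] <;> norm_num
  have hε2 : ∀ i : Fin n, ε i * ε i = 1 := by
    intro i; rcases hε i with h | h <;> rw [h] <;> norm_num
  -- all vertices are in the region R
  have hVm1 : ∀ i : Fin n, arrLine a b c i (V (i - 1)) = 0 := by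
    intro i
    have h0 := (hV (i - 1)).2
    rwa [sub_add_cancel] at h0
  have hVR : ∀ j k : Fin n, 0 ≤ ε j * arrLine a b c j (V k) := by
    intro j k
    by_cases hk1 : k = j - 1
    · rw [hk1, hVm1 j, mul_zero]
    · by_cases hk2 : k = j
      · rw [hk2, (hV j).1, mul_zero]
      · exact (hside j k hk1 hk2).le
  -- R is convex, hence contains the hull of the vertices
  have hcomb : ∀ (j : Fin n) (p q : F × F) (α β : F), α + β = 1 →
      arrLine a b c j (α • p + β • q) = α * arrLine a b c j p + β * arrLine a b c j q := by
    intro j p q α β hαβ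
    have e1 : (α • p + β • q).1 = α * p.1 + β * q.1 := rfl
    have e2 : (α • p + β • q).2 = α * p.2 + β * q.2 := rfl
    simp only [arrLine, e1, e2]
    linear_combination (c j) * hαβ
  have hRconv : Convex F {x : F × F | ∀ i : Fin n, 0 ≤ ε i * arrLine a b c i x} := by
    intro x hx y hy α β hα hβ hαβ
    simp only [Set.mem_setOf_eq] at hx hy ⊢
    intro i
    rw [hcomb i x y α β hαβ]
    nlinarith [mul_nonneg hα (hx i), mul_nonneg hβ (hy i)]
  have hhull : convexHull F (Set.range V) ⊆
      {x : F × F | ∀ i : Fin n, 0 ≤ ε i * arrLine a b c i x} := by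
    apply convexHull_min _ hRconv
    rintro _ ⟨k, rfl⟩
    simp only [Set.mem_setOf_eq]
    intro i
    exact hVR i k
  -- consecutive vertices are distinct
  have hVne : ∀ i : Fin n, V i ≠ V (i - 1) := by
    intro i heq
    refine hconc (i - 1) i (i + 1)
      (fun h => absurd (show (1 : Fin n) = 0 by linear_combination -h) h1ne)
      (fun h => absurd (show (1 : Fin n) = 0 by linear_combination -h) h1ne)
      (fun h => absurd (show (2 : Fin n) = 0 by linear_combination -h) h2ne)
      ⟨V i, ?_, (hV i).1, (hV i).2⟩
    rw [heq]
    exact (hV (i - 1)).1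
  have hab : ∀ i : Fin n, ¬(a i = 0 ∧ b i = 0) := by
    rintro i ⟨h1, h2⟩
    exact hnd i (by rw [h1, h2])
  -- edge characterization
  have hedge : ∀ (i : Fin n) (x : F × F), (∀ j : Fin n, 0 ≤ ε j * arrLine a b c j x) →
      arrLine a b c i x = 0 →
      ∃ t : F, 0 ≤ t ∧ t ≤ 1 ∧ x = V (i - 1) + t • (V i - V (i - 1)) := by
    intro i x hx hxi
    have hfip : arrLine a b c i (V (i - 1)) = 0 := hVm1 i
    have hfiq : arrLine a b c i (V i) = 0 := (hV i).1
    have hod : a i * (V i - V (i - 1)).1 + b i * (V i - V (i - 1)).2 = 0 := by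
      have := arrLine_sub_eq a b c i (V i) (V (i - 1))
      rw [hfiq, hfip] at this
      linarith
    have hox : a i * (x - V (i - 1)).1 + b i * (x - V (i - 1)).2 = 0 := by
      have := arrLine_sub_eq a b c i x (V (i - 1))
      rw [hxi, hfip] at this
      linarith
    obtain ⟨μ, hμ1, hμ2⟩ := orth_collinear (a i) (b i) _ _ (hab i) hod
    obtain ⟨σ, hσ1, hσ2⟩ := orth_collinear (a i) (b i) _ _ (hab i) hox
    have hdne : V i - V (i - 1) ≠ 0 := sub_ne_zero.mpr (hVne i)
    have hμne : μ ≠ 0 := by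
      intro h
      apply hdne
      rw [h, zero_mul] at hμ1 hμ2
      exact Prod.ext hμ1 hμ2
    have hxeq : x = V (i - 1) + (σ / μ) • (V i - V (i - 1)) := by
      apply Prod.ext
      · show x.1 = (V (i - 1)).1 + (σ / μ) * ((V i - V (i - 1)).1)
        rw [hμ1]
        have hc : σ / μ * (μ * -(b i)) = σ * -(b i) := by field_simp
        rw [hc]
        have hs1 : x.1 - (V (i - 1)).1 = σ * -(b i) := hσ1
        linarith
      · show x.2 = (V (i - 1)).2 + (σ / μ) * ((V i - V (i - 1)).2)
        rw [hμ2]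
        have hc : σ / μ * (μ * a i) = σ * a i := by field_simp
        rw [hc]
        have hs2 : x.2 - (V (i - 1)).2 = σ * a i := hσ2
        linarith
    have hB : 0 < ε (i - 1) * arrLine a b c (i - 1) (V i) :=
      hside (i - 1) i
        (fun h => absurd (show (2 : Fin n) = 0 by linear_combination h) h2ne)
        (fun h => absurd (show (1 : Fin n) = 0 by linear_combination h) h1ne)
    have hA : 0 < ε (i + 1) * arrLine a b c (i + 1) (V (i - 1)) :=
      hside (i + 1) (i - 1)
        (fun h => absurd (show (1 : Fin n) = 0 by linear_combination -h) h1ne)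
        (fun h => absurd (show (2 : Fin n) = 0 by linear_combination -h) h2ne)
    have hv1 : arrLine a b c (i - 1) x = (σ / μ) * arrLine a b c (i - 1) (V i) := by
      rw [hxeq, arrLine_smul_dir, (hV (i - 1)).1]
      ring
    have hv2 : arrLine a b c (i + 1) x = (1 - σ / μ) * arrLine a b c (i + 1) (V (i - 1)) := by
      rw [hxeq, arrLine_smul_dir, (hV i).2]
      ring
    have ht0 : 0 ≤ σ / μ := by
      have hx1 := hx (i - 1)
      rw [hv1] at hx1
      nlinarith [hB]
    have ht1 : σ / μ ≤ 1 := by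
      have hx2 := hx (i + 1)
      rw [hv2] at hx2
      nlinarith [hA]
    exact ⟨σ / μ, ht0, ht1, hxeq⟩
  -- the recession cone of R is trivial
  have hcone : ∀ w : F × F, (∀ i : Fin n, 0 ≤ ε i * (a i * w.1 + b i * w.2)) → w = 0 := by
    intro w hw
    by_contra hwne
    have hw12 : w.1 ≠ 0 ∨ w.2 ≠ 0 := by
      by_contra hcon
      push_neg at hcon
      exact hwne (Prod.ext hcon.1 hcon.2)
    have hwsq : 0 < w.1 ^ 2 + w.2 ^ 2 := by
      rcases hw12 with h | h
      · have h1 : 0 < w.1 ^ 2 := lt_of_le_of_ne (sq_nonneg _) (Ne.symm (pow_ne_zero 2 h))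
        nlinarith [sq_nonneg w.2]
      · have h1 : 0 < w.2 ^ 2 := lt_of_le_of_ne (sq_nonneg _) (Ne.symm (pow_ne_zero 2 h))
        nlinarith [sq_nonneg w.1]
    have hod : ∀ i : Fin n, a i * (V i - V (i - 1)).1 + b i * (V i - V (i - 1)).2 = 0 := by
      intro i
      have := arrLine_sub_eq a b c i (V i) (V (i - 1))
      rw [(hV i).1, hVm1 i] at this
      linarith
    choose μ hμ1 hμ2 using fun i =>
      orth_collinear (a i) (b i) (V i - V (i - 1)).1 (V i - V (i - 1)).2 (hab i) (hod i)
    have hμne : ∀ i : Fin n, μ i ≠ 0 := by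
      intro i h
      apply sub_ne_zero.mpr (hVne i)
      have h1 := hμ1 i; have h2 := hμ2 i
      rw [h, zero_mul] at h1 h2
      exact Prod.ext h1 h2
    -- sign relations
    have hrel1 : ∀ i : Fin n,
        ε (i + 1) * (μ i * (a i * b (i + 1) - a (i + 1) * b i)) < 0 := by
      intro i
      have hpos := hside (i + 1) (i - 1)
        (fun h => absurd (show (1 : Fin n) = 0 by linear_combination -h) h1ne)
        (fun h => absurd (show (2 : Fin n) = 0 by linear_combination -h) h2ne)
      have hd := arrLine_sub_eq a b c (i + 1) (V i) (V (i - 1))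
      rw [hμ1 i, hμ2 i, (hV i).2] at hd
      have hkey : ε (i + 1) * (μ i * (a i * b (i + 1) - a (i + 1) * b i)) =
          -(ε (i + 1) * arrLine a b c (i + 1) (V (i - 1))) := by
        linear_combination (-(ε (i + 1))) * hd
      rw [hkey]
      linarith
    have hrel2 : ∀ i : Fin n,
        ε i * (μ (i + 1) * (a i * b (i + 1) - a (i + 1) * b i)) < 0 := by
      intro i
      have hpos := hside i (i + 1)
        (fun h => absurd (show (2 : Fin n) = 0 by linear_combination h) h2ne)
        (fun h => absurd (show (1 : Fin n) = 0 by linear_combination h) h1ne)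
      have hi1 : i + 1 - 1 = i := by ring
      have ha1 := hμ1 (i + 1); have ha2 := hμ2 (i + 1)
      rw [hi1] at ha1 ha2
      have hd := arrLine_sub_eq a b c i (V (i + 1)) (V i)
      rw [ha1, ha2, (hV i).1] at hd
      have hkey : ε i * (μ (i + 1) * (a i * b (i + 1) - a (i + 1) * b i)) =
          -(ε i * arrLine a b c i (V (i + 1))) := by
        linear_combination (ε i) * hd
      rw [hkey]
      linarith
    have hχrel1 : ∀ i : Fin n,
        (ε i * μ i) * (ε i * ε (i + 1) * (a i * b (i + 1) - a (i + 1) * b i)) < 0 := by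
      intro i
      have hkey : (ε i * μ i) * (ε i * ε (i + 1) * (a i * b (i + 1) - a (i + 1) * b i)) =
          ε (i + 1) * (μ i * (a i * b (i + 1) - a (i + 1) * b i)) := by
        linear_combination (ε (i + 1) * μ i * (a i * b (i + 1) - a (i + 1) * b i)) * hε2 i
      rw [hkey]
      exact hrel1 i
    have hχrel2 : ∀ i : Fin n,
        (ε (i + 1) * μ (i + 1)) * (ε i * ε (i + 1) * (a i * b (i + 1) - a (i + 1) * b i)) < 0 := by
      intro i
      have hkey : (ε (i + 1) * μ (i + 1)) *
            (ε i * ε (i + 1) * (a i * b (i + 1) - a (i + 1) * b i)) =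
          ε i * (μ (i + 1) * (a i * b (i + 1) - a (i + 1) * b i)) := by
        linear_combination (ε i * μ (i + 1) * (a i * b (i + 1) - a (i + 1) * b i)) * hε2 (i + 1)
      rw [hkey]
      exact hrel2 i
    have hsame : ∀ i : Fin n, 0 < (ε i * μ i) * (ε (i + 1) * μ (i + 1)) := by
      intro i
      have h1 := hχrel1 i
      have h2 := hχrel2 i
      nlinarith [mul_pos (neg_pos.mpr h1) (neg_pos.mpr h2),
        sq_nonneg (ε i * ε (i + 1) * (a i * b (i + 1) - a (i + 1) * b i))]
    have hν0 : ε 0 * μ 0 ≠ 0 := mul_ne_zero (hεne 0) (hμne 0)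
    rcases lt_or_gt_of_ne hν0 with hneg | hpos
    · -- ε 0 * μ 0 < 0 : all χ i > 0
      have hall : ∀ i : Fin n, ε i * μ i < 0 :=
        fin_cyc_ind (fun i => ε i * μ i < 0) hneg
          (fun i hi => show ε (i + 1) * μ (i + 1) < 0 by nlinarith [hsame i, hi])
      have hχpos : ∀ i : Fin n,
          0 < ε i * ε (i + 1) * (a i * b (i + 1) - a (i + 1) * b i) := by
        intro i
        nlinarith [hχrel1 i, hall i]
      refine no_cyclic_increase (fun i => ε i * (a i * w.1 + b i * w.2))
        (fun i => w.1 * (ε i * b i) - w.2 * (ε i * a i)) hw ?_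
      intro i
      show 0 < ε i * (a i * w.1 + b i * w.2) * (w.1 * (ε (i + 1) * b (i + 1)) - w.2 * (ε (i + 1) * a (i + 1))) -
        (w.1 * (ε i * b i) - w.2 * (ε i * a i)) * (ε (i + 1) * (a (i + 1) * w.1 + b (i + 1) * w.2))
      nlinarith [mul_pos hwsq (hχpos i)]
    · -- ε 0 * μ 0 > 0 : all χ i < 0
      have hall : ∀ i : Fin n, 0 < ε i * μ i :=
        fin_cyc_ind (fun i => 0 < ε i * μ i) hpos
          (fun i hi => show 0 < ε (i + 1) * μ (i + 1) by nlinarith [hsame i, hi])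
      have hχneg : ∀ i : Fin n,
          ε i * ε (i + 1) * (a i * b (i + 1) - a (i + 1) * b i) < 0 := by
        intro i
        nlinarith [hχrel1 i, hall i]
      refine no_cyclic_increase (fun i => ε i * (a i * w.1 + b i * w.2))
        (fun i => -(w.1 * (ε i * b i) - w.2 * (ε i * a i))) hw ?_
      intro i
      show 0 < ε i * (a i * w.1 + b i * w.2) * (-(w.1 * (ε (i + 1) * b (i + 1)) - w.2 * (ε (i + 1) * a (i + 1)))) -
        (-(w.1 * (ε i * b i) - w.2 * (ε i * a i))) * (ε (i + 1) * (a (i + 1) * w.1 + b (i + 1) * w.2))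
      nlinarith [mul_pos hwsq (neg_pos.mpr (hχneg i))]
  -- R is contained in the hull
  have hRsub : ∀ x : F × F, (∀ i : Fin n, 0 ≤ ε i * arrLine a b c i x) →
      x ∈ convexHull F (Set.range V) := by
    intro x hx
    by_cases hx0 : x = V 0
    · exact subset_convexHull F _ ⟨0, hx0.symm⟩
    · have hwne : x - V 0 ≠ 0 := sub_ne_zero.mpr hx0
      set w : F × F := x - V 0 with hwdef
      have hneg : ¬ ∀ i : Fin n, 0 ≤ ε i * (a i * w.1 + b i * w.2) := fun h => hwne (hcone w h)
      push_neg at hneg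
      set S : Finset (Fin n) :=
        Finset.univ.filter (fun i => ε i * (a i * w.1 + b i * w.2) < 0) with hS
      have hSne : S.Nonempty := by
        obtain ⟨i, hi⟩ := hneg
        exact ⟨i, by simp only [hS, Finset.mem_filter, Finset.mem_univ, true_and]; linarith⟩
      obtain ⟨j, hjS, hjmin⟩ := S.exists_min_image
        (fun i => (ε i * arrLine a b c i x) / (-(ε i * (a i * w.1 + b i * w.2)))) hSne
      have hjneg : ε j * (a j * w.1 + b j * w.2) < 0 := by
        simpa only [hS, Finset.mem_filter, Finset.mem_univ, true_and] using hjS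
      set T := (ε j * arrLine a b c j x) / (-(ε j * (a j * w.1 + b j * w.2))) with hT
      have hT0 : 0 ≤ T := div_nonneg (hx j) (by linarith)
      set y : F × F := x + T • w with hy
      have hval : ∀ i : Fin n, ε i * arrLine a b c i y =
          ε i * arrLine a b c i x + T * (ε i * (a i * w.1 + b i * w.2)) := by
        intro i
        rw [hy, arrLine_add_smul]
        ring
      have hyR : ∀ i : Fin n, 0 ≤ ε i * arrLine a b c i y := by
        intro i
        rw [hval i]
        by_cases hiS : i ∈ S
        · have hineg : ε i * (a i * w.1 + b i * w.2) < 0 := by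
            simpa only [hS, Finset.mem_filter, Finset.mem_univ, true_and] using hiS
          have hle := hjmin i hiS
          have hτm : ((ε i * arrLine a b c i x) / (-(ε i * (a i * w.1 + b i * w.2)))) *
              (ε i * (a i * w.1 + b i * w.2)) = -(ε i * arrLine a b c i x) :=
            div_neg_mul _ _ hineg
          have hmm := mul_le_mul_of_nonpos_right hle hineg.le
          rw [hτm] at hmm
          linarith
        · have hge : 0 ≤ ε i * (a i * w.1 + b i * w.2) := by
            by_contra hcc
            push_neg at hcc
            exact hiS (by simp only [hS, Finset.mem_filter, Finset.mem_univ, true_and]; linarith)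
          exact add_nonneg (hx i) (mul_nonneg hT0 hge)
      have hjy : arrLine a b c j y = 0 := by
        have h0 : ε j * arrLine a b c j y = 0 := by
          rw [hval j, hT, div_neg_mul _ _ hjneg]
          ring
        rcases hε j with h | h <;> rw [h] at h0 <;> linarith
      obtain ⟨t, ht0', ht1', hyeq⟩ := hedge j y hyR hjy
      have hymem : y ∈ convexHull F (Set.range V) := by
        rw [hyeq]
        have hc : V (j - 1) + t • (V j - V (j - 1)) = (1 - t) • V (j - 1) + t • V j := by
          apply Prod.ext
          · show (V (j - 1)).1 + t * ((V j).1 - (V (j - 1)).1) =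
              (1 - t) * (V (j - 1)).1 + t * (V j).1
            ring
          · show (V (j - 1)).2 + t * ((V j).2 - (V (j - 1)).2) =
              (1 - t) * (V (j - 1)).2 + t * (V j).2
            ring
        rw [hc]
        exact (convex_convexHull F _) (subset_convexHull F _ (Set.mem_range_self (j - 1)))
          (subset_convexHull F _ (Set.mem_range_self j)) (by linarith) ht0' (by ring)
      have h1T : (0 : F) < 1 + T := by linarith
      have hx' : x = (T / (1 + T)) • V 0 + (1 / (1 + T)) • y := by
        have hV0 : V 0 = x - w := by rw [hwdef]; abel
        apply Prod.ext
        · show x.1 = (T / (1 + T)) * (V 0).1 + (1 / (1 + T)) * y.1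
          rw [hV0, hy]
          show x.1 = (T / (1 + T)) * (x.1 - w.1) + (1 / (1 + T)) * (x.1 + T * w.1)
          field_simp
          ring
        · show x.2 = (T / (1 + T)) * (V 0).2 + (1 / (1 + T)) * y.2
          rw [hV0, hy]
          show x.2 = (T / (1 + T)) * (x.2 - w.2) + (1 / (1 + T)) * (x.2 + T * w.2)
          field_simp
          ring
      rw [hx']
      exact (convex_convexHull F _) (subset_convexHull F _ (Set.mem_range_self 0)) hymem
        (div_nonneg hT0 h1T.le) (div_nonneg zero_le_one h1T.le) (by field_simp; ring)
  refine ⟨?_, ?_, ?_⟩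
  · apply Set.Subset.antisymm
    · intro x hx
      exact hRsub x hx
    · exact hhull
  · rintro ⟨v, w, hwne, hray⟩
    apply hwne
    apply hcone
    intro i
    by_contra hc
    rw [not_le] at hc
    have hv0 : 0 ≤ ε i * arrLine a b c i v := by
      have h0 := hray 0 le_rfl
      rw [Set.mem_setOf_eq] at h0
      have h1 := h0 i
      rwa [zero_smul, add_zero] at h1
    set t0 := (ε i * arrLine a b c i v + 1) / (-(ε i * (a i * w.1 + b i * w.2))) with ht0
    have ht0pos : 0 ≤ t0 := div_nonneg (by linarith) (by linarith)
    have hr := hray t0 ht0pos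
    rw [Set.mem_setOf_eq] at hr
    have hri := hr i
    rw [arrLine_add_smul] at hri
    have hkey : ε i * (arrLine a b c i v + t0 * (a i * w.1 + b i * w.2)) = -1 := by
      have h2 : ε i * (arrLine a b c i v + t0 * (a i * w.1 + b i * w.2)) =
          ε i * arrLine a b c i v + t0 * (ε i * (a i * w.1 + b i * w.2)) := by ring
      rw [h2, ht0, div_neg_mul _ _ hc]
      ring
    rw [hkey] at hri
    linarith
  · intro i
    ext x
    simp only [Set.mem_inter_iff, Set.mem_setOf_eq]
    constructor
    · rintro ⟨hx, hxi⟩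
      obtain ⟨t, h0, h1, heq⟩ := hedge i x hx hxi
      rw [segment_eq_image']
      exact ⟨t, Set.mem_Icc.mpr ⟨h0, h1⟩, heq.symm⟩
    · intro hx
      rw [segment_eq_image'] at hx
      obtain ⟨t, htmem, rfl⟩ := hx
      rw [Set.mem_Icc] at htmem
      obtain ⟨h0, h1⟩ := htmem
      constructor
      · intro jj
        rw [arrLine_smul_dir]
        nlinarith [mul_nonneg (sub_nonneg.mpr h1) (hVR jj (i - 1)), mul_nonneg h0 (hVR jj i)]
      · rw [arrLine_smul_dir, hVm1 i, (hV i).1]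
        ring
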